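/- Let B ⊆ ℤ^d be a finite set of integer vectors and k a positive integer. Then there exists a convex set C ⊆ ℝ^d such that: (1) C = C' + L^⊥ where L ⊆ ℝ^d is a linear subspace and C' ⊆ L is an affine image of a section of the cone of r×r symmetric PSD matrices by an affine subspace with r ≤ C(d + k + 2, k); (2) B ⊆ C; and (3) for every linear function ℓ(x) = a₁x₁ + ⋯ + a_d x_d with integer coefficients satisfying max_{x∈B} ℓ(x) − min_{x∈B} ℓ(x) ≤ k, one has max_{x∈B} ℓ(x) = max_{x∈C} ℓ(x). -/

import Mathlib

open Pointwise Finset Matrix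

noncomputable section Stmt13Aux

/-- Homogenized coordinate functions: the first `d` are the coordinates, the last is 1. -/
def s13y (d : ℕ) (i : Fin (d+1)) (x : EuclideanSpace ℝ (Fin d)) : ℝ :=
  if h : (i : ℕ) < d then x ⟨i, h⟩ else 1

/-- Monomial of degree `k` in the homogenized variables. -/
def s13phi (d k : ℕ) (m : Sym (Fin (d+1)) k) (x : EuclideanSpace ℝ (Fin d)) : ℝ :=
  ((m.1).map (fun i => s13y d i x)).prod

lemma s13y_last (d : ℕ) (x : EuclideanSpace ℝ (Fin d)) : s13y d (Fin.last d) x = 1 := by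
  simp [s13y]

lemma s13y_castSucc (d : ℕ) (i : Fin d) (x : EuclideanSpace ℝ (Fin d)) :
    s13y d i.castSucc x = x i := by
  simp only [s13y, Fin.coe_castSucc, i.isLt, dif_pos]

/-- products of `k` linear forms in the homogenized variables lie in the span of the
degree-`k` monomials. -/
lemma s13prod_mem_span (d k : ℕ) (u : Fin k → Fin (d+1) → ℝ) :
    (fun x => ∏ t : Fin k, ∑ i : Fin (d+1), u t i * s13y d i x)
      ∈ Submodule.span ℝ (Set.range (s13phi d k)) := by
  classical
  have hrw : (fun x => ∏ t : Fin k, ∑ i : Fin (d+1), u t i * s13y d i x)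
      = ∑ f ∈ Fintype.piFinset (fun _ : Fin k => (univ : Finset (Fin (d+1)))),
          (∏ t, u t (f t)) • s13phi d k
            (Sym.mk (Multiset.map f Finset.univ.val) (by simp)) := by
    funext x
    rw [Finset.sum_apply]
    rw [Finset.prod_univ_sum]
    refine Finset.sum_congr rfl (fun f _ => ?_)
    have : s13phi d k (Sym.mk (Multiset.map f Finset.univ.val) (by simp)) x
        = ∏ t : Fin k, s13y d (f t) x := by
      simp only [s13phi, Multiset.map_map]
      rw [Finset.prod_eq_multiset_prod]
      rfl
    rw [Pi.smul_apply, smul_eq_mul, this, ← Finset.prod_mul_distrib]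
  rw [hrw]
  exact Submodule.sum_mem _ (fun f _ =>
    Submodule.smul_mem _ _ (Submodule.subset_span ⟨_, rfl⟩))

/-- The Lagrange factors composed with an affine function lie in the span of monomials. -/
lemma s13affine_prod_mem_span (d k : ℕ) (j : ℕ) (hj : j ∈ Finset.range (k+1))
    (c0 : ℝ) (a : Fin d → ℝ) :
    (fun x : EuclideanSpace ℝ (Fin d) => ∏ i ∈ (Finset.range (k+1)).erase j,
        ((c0 - (∑ i' : Fin d, a i' * x i') - (i : ℝ)) / ((j : ℝ) - (i : ℝ))))
      ∈ Submodule.span ℝ (Set.range (s13phi d k)) := by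
  classical
  set s := (Finset.range (k+1)).erase j with hs
  have hcard : s.card = k := by
    rw [hs, Finset.card_erase_of_mem hj, Finset.card_range]
    omega
  let e := Finset.equivFinOfCardEq hcard
  -- the linear-form coefficients for the factor indexed by `i`
  let u : ℕ → Fin (d+1) → ℝ := fun i i' =>
    (if h : (i' : ℕ) < d then - a ⟨i', h⟩ else c0 - (i : ℝ)) / ((j : ℝ) - (i : ℝ))
  have hfac : ∀ (i : ℕ) (x : EuclideanSpace ℝ (Fin d)),
      (c0 - (∑ i' : Fin d, a i' * x i') - (i : ℝ)) / ((j : ℝ) - (i : ℝ))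
        = ∑ i' : Fin (d+1), u i i' * s13y d i' x := by
    intro i x
    rw [Fin.sum_univ_castSucc]
    have h1 : ∀ i' : Fin d, u i i'.castSucc * s13y d i'.castSucc x
        = (- a i' * x i') / ((j : ℝ) - (i : ℝ)) := by
      intro i'
      rw [s13y_castSucc]
      simp only [u, Fin.coe_castSucc]
      rw [dif_pos i'.isLt, Fin.eta]
      ring
    have h2 : u i (Fin.last d) * s13y d (Fin.last d) x = (c0 - (i : ℝ)) / ((j : ℝ) - (i : ℝ)) := by
      rw [s13y_last]
      simp [u]
    rw [h2]
    rw [Finset.sum_congr rfl (fun i' _ => h1 i')]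
    rw [← Finset.sum_div, ← add_div]
    congr 1
    simp only [neg_mul, Finset.sum_neg_distrib]
    ring
  have hrw : (fun x : EuclideanSpace ℝ (Fin d) => ∏ i ∈ s,
        ((c0 - (∑ i' : Fin d, a i' * x i') - (i : ℝ)) / ((j : ℝ) - (i : ℝ))))
      = (fun x => ∏ t : Fin k, ∑ i' : Fin (d+1), u ((e.symm t) : ℕ) i' * s13y d i' x) := by
    funext x
    rw [← Finset.prod_coe_sort s
      (fun i => (c0 - (∑ i' : Fin d, a i' * x i') - (i : ℝ)) / ((j : ℝ) - (i : ℝ)))]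
    rw [← Equiv.prod_comp e.symm]
    exact Finset.prod_congr rfl (fun t _ => hfac _ x)
  rw [hrw]
  exact s13prod_mem_span d k _

/-- Lagrange interpolation values. -/
lemma s13lagrange (k j n : ℕ) (hj : j ∈ Finset.range (k+1)) (hn : n ∈ Finset.range (k+1)) :
    ∏ i ∈ (Finset.range (k+1)).erase j, (((n : ℝ) - (i : ℝ)) / ((j : ℝ) - (i : ℝ)))
      = if n = j then 1 else 0 := by
  by_cases h : n = j
  · subst h
    rw [if_pos rfl]
    refine Finset.prod_eq_one (fun i hi => ?_)
    have hne : i ≠ n := (Finset.mem_erase.mp hi).1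
    have hne' : (n : ℝ) ≠ (i : ℝ) := by exact_mod_cast Ne.symm hne
    exact div_self (sub_ne_zero.mpr hne')
  · rw [if_neg h]
    refine Finset.prod_eq_zero (Finset.mem_erase.mpr ⟨h, hn⟩) ?_
    simp

/-- the key scalar identity: an integer `n ∈ [0,k]` equals the weighted sum of squared
Lagrange basis values. -/
lemma s13ident (k n : ℕ) (hn : n ∈ Finset.range (k+1)) :
    ∑ j ∈ Finset.range (k+1), (j : ℝ) *
      (∏ i ∈ (Finset.range (k+1)).erase j, (((n : ℝ) - (i : ℝ)) / ((j : ℝ) - (i : ℝ))))^2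
      = (n : ℝ) := by
  rw [Finset.sum_eq_single n]
  · rw [s13lagrange k n n hn hn, if_pos rfl]; ring
  · intro j hjb hne
    rw [s13lagrange k j n hjb hn, if_neg (fun hh => hne hh.symm)]
    ring
  · intro h; exact absurd hn h

/-- rank one matrices are PSD -/
lemma s13psd {n : ℕ} (v : Fin n → ℝ) : (Matrix.vecMulVec v v).PosSemidef := by
  refine Matrix.PosSemidef.of_dotProduct_mulVec_nonneg ?_ ?_
  · ext i j; simp [Matrix.conjTranspose_apply, Matrix.vecMulVec_apply, mul_comm]
  · intro x
    have hmv : ∀ i, (Matrix.vecMulVec v v *ᵥ x) i = v i * (v ⬝ᵥ x) := by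
      intro i; simp [Matrix.mulVec, Matrix.vecMulVec_apply, dotProduct,
        Finset.mul_sum, mul_assoc]
    have h2 : star x ⬝ᵥ (Matrix.vecMulVec v v *ᵥ x) = (v ⬝ᵥ x) * (v ⬝ᵥ x) := by
      simp only [dotProduct, hmv, star_trivial]
      rw [Finset.sum_congr rfl (fun i _ => by ring :
        ∀ i ∈ (univ : Finset (Fin n)), x i * (v i * (∑ j, v j * x j))
          = (v i * x i) * (∑ j, v j * x j)), ← Finset.sum_mul]
    rw [h2]
    exact mul_self_nonneg _

lemma s13convex_psd (n : ℕ) : Convex ℝ {M : Matrix (Fin n) (Fin n) ℝ | M.PosSemidef} := by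
  intro M hM N hN p q hp hq hpq
  refine Matrix.PosSemidef.of_dotProduct_mulVec_nonneg ?_ ?_
  · have h1 : M.IsHermitian := hM.1
    have h2 : N.IsHermitian := hN.1
    simp only [Matrix.IsHermitian] at *
    rw [Matrix.conjTranspose_add, Matrix.conjTranspose_smul, Matrix.conjTranspose_smul, h1, h2]
    simp [star_trivial]
  · intro x
    simp only [Matrix.add_mulVec, Matrix.smul_mulVec, dotProduct_add,
      dotProduct_smul, smul_eq_mul]
    have hM' := hM.dotProduct_mulVec_nonneg x
    have hN' := hN.dotProduct_mulVec_nonneg x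
    have : (0:ℝ) ≤ p * (star x ⬝ᵥ M *ᵥ x) := mul_nonneg hp (by simpa using hM')
    have : (0:ℝ) ≤ q * (star x ⬝ᵥ N *ᵥ x) := mul_nonneg hq (by simpa using hN')
    positivity

/-- the linear "extraction" map behind `T`. -/
def s13L (d r : ℕ) (idx : Fin d → Fin r) (i0 : Fin r) :
    Matrix (Fin r) (Fin r) ℝ →ₗ[ℝ] EuclideanSpace ℝ (Fin d) where
  toFun M := WithLp.toLp 2 (fun i => M (idx i) i0)
  map_add' M N := rfl
  map_smul' c M := rfl


lemma s13quad_one {r : ℕ} (u c : Fin r → ℝ) :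
    c ⬝ᵥ (Matrix.vecMulVec u u *ᵥ c) = (∑ p, c p * u p)^2 := by
  simp only [Matrix.mulVec, dotProduct, Matrix.vecMulVec_apply]
  rw [pow_two, Finset.sum_mul]
  refine Finset.sum_congr rfl fun p _ => ?_
  rw [Finset.mul_sum, Finset.mul_sum]
  exact Finset.sum_congr rfl fun q _ => by ring

lemma s13quad {r : ℕ} {β : Type} (s : Finset β) (w : β → ℝ) (vv : β → Fin r → ℝ) (c : Fin r → ℝ) :
    c ⬝ᵥ ((∑ b ∈ s, w b • Matrix.vecMulVec (vv b) (vv b)) *ᵥ c)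
      = ∑ b ∈ s, w b * (∑ p, c p * vv b p)^2 := by
  classical
  induction s using Finset.induction_on with
  | empty => simp
  | @insert a t ha ih =>
      rw [Finset.sum_insert ha, Finset.sum_insert ha, Matrix.add_mulVec,
        dotProduct_add, Matrix.smul_mulVec, dotProduct_smul,
        s13quad_one, ih]
      simp

end Stmt13Aux

theorem stmt13 (d k : ℕ) (hk : 0 < k) (B : Finset (EuclideanSpace ℝ (Fin d)))
    (hBne : B.Nonempty) (hint : ∀ x ∈ B, ∀ i : Fin d, ∃ m : ℤ, x i = (m : ℝ)) :
    ∃ (C C' : Set (EuclideanSpace ℝ (Fin d)))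
      (L : Submodule ℝ (EuclideanSpace ℝ (Fin d))),
      Convex ℝ C ∧
      C = C' + (Lᗮ : Set (EuclideanSpace ℝ (Fin d))) ∧
      C' ⊆ (L : Set (EuclideanSpace ℝ (Fin d))) ∧
      (∃ r : ℕ, r ≤ (d + k + 2).choose k ∧
        ∃ (A : AffineSubspace ℝ (Matrix (Fin r) (Fin r) ℝ))
          (T : Matrix (Fin r) (Fin r) ℝ →ᵃ[ℝ] EuclideanSpace ℝ (Fin d)),
          C' = T '' ((A : Set (Matrix (Fin r) (Fin r) ℝ)) ∩ {M | M.PosSemidef})) ∧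
      ↑B ⊆ C ∧
      ∀ a : Fin d → ℤ,
        B.sup' hBne (fun x => ∑ i, (a i : ℝ) * x i)
            - B.inf' hBne (fun x => ∑ i, (a i : ℝ) * x i) ≤ (k : ℝ) →
        IsGreatest ((fun x : EuclideanSpace ℝ (Fin d) => ∑ i, (a i : ℝ) * x i) '' C)
          (B.sup' hBne (fun x => ∑ i, (a i : ℝ) * x i)) := by
  classical
  let ι := Sym (Fin (d+1)) k
  let r : ℕ := Fintype.card ι
  let e : Fin r ≃ ι := (Fintype.equivFin ι).symm
  let μ0 : ι := Sym.mk (Multiset.replicate k (Fin.last d)) (by simp)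
  let μ : Fin d → ι := fun i =>
    Sym.mk (i.castSucc ::ₘ Multiset.replicate (k-1) (Fin.last d)) (by simp; omega)
  have hphi0 : ∀ x : (EuclideanSpace ℝ (Fin d)), s13phi d k μ0 x = 1 := by
    intro x
    simp [s13phi, μ0, Multiset.map_replicate, Multiset.prod_replicate, s13y_last]
  have hphii : ∀ (i : Fin d) (x : (EuclideanSpace ℝ (Fin d))), s13phi d k (μ i) x = x i := by
    intro i x
    simp [s13phi, μ, Multiset.map_cons, Multiset.map_replicate, Multiset.prod_cons,
      Multiset.prod_replicate, s13y_last, s13y_castSucc]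
  let v : (EuclideanSpace ℝ (Fin d)) → Fin r → ℝ := fun x p => s13phi d k (e p) x
  let Φ : (EuclideanSpace ℝ (Fin d)) → Matrix (Fin r) (Fin r) ℝ := fun x => Matrix.vecMulVec (v x) (v x)
  let A : AffineSubspace ℝ (Matrix (Fin r) (Fin r) ℝ) :=
    affineSpan ℝ (Set.range (fun b : ↥B => Φ (b : (EuclideanSpace ℝ (Fin d)))))
  let T : Matrix (Fin r) (Fin r) ℝ →ᵃ[ℝ] (EuclideanSpace ℝ (Fin d)) :=
    (s13L d r (fun i => e.symm (μ i)) (e.symm μ0)).toAffineMap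
  let C' : Set (EuclideanSpace ℝ (Fin d)) := T '' ((A : Set (Matrix (Fin r) (Fin r) ℝ)) ∩ {M | M.PosSemidef})
  have hTΦ : ∀ x : (EuclideanSpace ℝ (Fin d)), T (Φ x) = x := by
    intro x
    ext i
    show Matrix.vecMulVec (v x) (v x) (e.symm (μ i)) (e.symm μ0) = x i
    rw [Matrix.vecMulVec_apply]
    show s13phi d k (e (e.symm (μ i))) x * s13phi d k (e (e.symm μ0)) x = x i
    rw [e.apply_symm_apply, e.apply_symm_apply, hphii, hphi0, mul_one]
  have hBC : ↑B ⊆ C' := by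
    intro x hx
    exact ⟨Φ x, ⟨subset_affineSpan ℝ _ ⟨⟨x, Finset.mem_coe.mp hx⟩, rfl⟩, s13psd _⟩, hTΦ x⟩
  refine ⟨C', C', ⊤, ?_, ?_, ?_, ?_, hBC, ?_⟩
  · exact Convex.affine_image T ((A.convex).inter (s13convex_psd r))
  · rw [Submodule.top_orthogonal_eq_bot]
    ext y
    rw [Submodule.bot_coe, Set.add_singleton]
    simp
  · intro x _
    simp [Submodule.top_coe]
  · refine ⟨r, ?_, A, T, rfl⟩
    show Fintype.card ι ≤ _
    rw [Sym.card_sym_eq_multichoose, Nat.multichoose_eq, Fintype.card_fin]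
    have h1 : d + 1 + k - 1 = d + k := by omega
    rw [h1]
    exact Nat.choose_le_choose k (by omega)
  · intro a hosc
    set ℓf : (EuclideanSpace ℝ (Fin d)) → ℝ := fun x => ∑ i, (a i : ℝ) * x i with hℓf
    obtain ⟨b0, hb0, hb0max⟩ := Finset.exists_mem_eq_sup' hBne ℓf
    constructor
    · exact ⟨b0, hBC (Finset.mem_coe.mpr hb0), hb0max.symm⟩
    · rintro y ⟨x, hxC, rfl⟩
      obtain ⟨M, ⟨hMA, hMpsd⟩, rfl⟩ := hxC
      obtain ⟨s, w, hw1, hMw⟩ := eq_affineCombination_of_mem_affineSpan hMA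
      rw [affineCombination_eq_linear_combination s _ w hw1] at hMw
      -- integer values of ℓf on B
      have hz : ∀ b : ↥B, ∃ z : ℤ, ℓf (b : (EuclideanSpace ℝ (Fin d))) = (z : ℝ) := by
        intro b
        choose m hm using hint b b.2
        refine ⟨∑ i, a i * m i, ?_⟩
        rw [hℓf]
        push_cast
        exact Finset.sum_congr rfl (fun i _ => by rw [hm i])
      choose z hzv using hz
      have hsupz : B.sup' hBne ℓf = ((z ⟨b0, hb0⟩ : ℤ) : ℝ) := by
        rw [hb0max]; exact hzv ⟨b0, hb0⟩
      have key : ∀ b : ↥B, ∃ n : ℕ, n ∈ Finset.range (k+1) ∧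
          B.sup' hBne ℓf - ℓf (b : (EuclideanSpace ℝ (Fin d))) = (n : ℝ) := by
        intro b
        have h1 : ℓf (b : (EuclideanSpace ℝ (Fin d))) ≤ B.sup' hBne ℓf := Finset.le_sup' ℓf b.2
        have h2 : B.inf' hBne ℓf ≤ ℓf (b : (EuclideanSpace ℝ (Fin d))) := Finset.inf'_le ℓf b.2
        have h3 : B.sup' hBne ℓf - ℓf (b : (EuclideanSpace ℝ (Fin d))) ≤ (k : ℝ) := by linarith
        have hzb := hzv b
        have hge : z b ≤ z ⟨b0, hb0⟩ := by
          have : ((z b : ℤ) : ℝ) ≤ ((z ⟨b0, hb0⟩ : ℤ) : ℝ) := by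
            rw [← hzb, ← hsupz]; exact h1
          exact_mod_cast this
        have hle : z ⟨b0, hb0⟩ - z b ≤ (k : ℤ) := by
          have : ((z ⟨b0, hb0⟩ : ℤ) : ℝ) - ((z b : ℤ) : ℝ) ≤ (k : ℝ) := by
            rw [← hzb, ← hsupz]; exact h3
          exact_mod_cast this
        refine ⟨(z ⟨b0, hb0⟩ - z b).toNat, ?_, ?_⟩
        · rw [Finset.mem_range]; omega
        · have hnn : (0:ℤ) ≤ z ⟨b0, hb0⟩ - z b := by omega
          rw [hsupz, hzb]
          rw [show (((z ⟨b0, hb0⟩ - z b).toNat : ℕ) : ℝ) = (((z ⟨b0, hb0⟩ - z b).toNat : ℤ) : ℝ) from (Int.cast_natCast _).symm, Int.toNat_of_nonneg hnn]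
          push_cast
          ring
      choose n hn1 hn2 using key
      -- the Lagrange-factor functions
      set cmax := B.sup' hBne ℓf with hcmax
      let Pf : ℕ → (EuclideanSpace ℝ (Fin d)) → ℝ := fun j x => ∏ i ∈ (Finset.range (k+1)).erase j,
        ((cmax - ℓf x - (i : ℝ)) / ((j : ℝ) - (i : ℝ)))
      have hcert : ∀ b : ↥B, cmax - ℓf (b : (EuclideanSpace ℝ (Fin d)))
          = ∑ j ∈ Finset.range (k+1), (j : ℝ) * (Pf j (b : (EuclideanSpace ℝ (Fin d))))^2 := by
        intro b
        have hPf : ∀ j, Pf j (b : (EuclideanSpace ℝ (Fin d))) = ∏ i ∈ (Finset.range (k+1)).erase j,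
            (((n b : ℝ) - (i : ℝ)) / ((j : ℝ) - (i : ℝ))) :=
          fun j => Finset.prod_congr rfl (fun i _ => by rw [hn2 b])
        rw [hn2 b, ← s13ident k (n b) (hn1 b)]
        exact Finset.sum_congr rfl (fun j _ => by rw [hPf j])
      -- value of the linear functional on T M
      have hMpq : ∀ i : Fin d, M (e.symm (μ i)) (e.symm μ0)
          = ∑ b ∈ s, w b * (b : (EuclideanSpace ℝ (Fin d))) i := by
        intro i
        rw [hMw, Matrix.sum_apply]
        refine Finset.sum_congr rfl fun b _ => ?_
        rw [Matrix.smul_apply, smul_eq_mul]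
        show w b * (Matrix.vecMulVec (v (b : (EuclideanSpace ℝ (Fin d)))) (v (b : (EuclideanSpace ℝ (Fin d)))) (e.symm (μ i)) (e.symm μ0)) = _
        rw [Matrix.vecMulVec_apply]
        show w b * (s13phi d k (e (e.symm (μ i))) (b : (EuclideanSpace ℝ (Fin d)))
          * s13phi d k (e (e.symm μ0)) (b : (EuclideanSpace ℝ (Fin d)))) = _
        rw [e.apply_symm_apply, e.apply_symm_apply, hphii, hphi0, mul_one]
      have hℓT : ℓf (T M) = ∑ b ∈ s, w b * ℓf (b : (EuclideanSpace ℝ (Fin d))) := by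
        show ∑ i, (a i : ℝ) * M (e.symm (μ i)) (e.symm μ0) = _
        rw [Finset.sum_congr rfl (fun i _ => by rw [hMpq i] :
          ∀ i ∈ (Finset.univ : Finset (Fin d)), (a i : ℝ) * M (e.symm (μ i)) (e.symm μ0)
            = (a i : ℝ) * ∑ b ∈ s, w b * (b : (EuclideanSpace ℝ (Fin d))) i)]
        simp only [Finset.mul_sum]
        rw [Finset.sum_comm]
        refine Finset.sum_congr rfl fun b _ => ?_
        rw [hℓf, Finset.mul_sum]
        exact Finset.sum_congr rfl fun i _ => by ring
      have hsub : cmax - ℓf (T M) = ∑ b ∈ s, w b * (cmax - ℓf (b : (EuclideanSpace ℝ (Fin d)))) := by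
        rw [hℓT]
        simp only [mul_sub]
        rw [Finset.sum_sub_distrib, ← Finset.sum_mul, hw1, one_mul]
      have hnonneg : 0 ≤ cmax - ℓf (T M) := by
        rw [hsub]
        rw [Finset.sum_congr rfl (fun b _ => by rw [hcert b] :
          ∀ b ∈ s, w b * (cmax - ℓf (b : (EuclideanSpace ℝ (Fin d))))
            = w b * ∑ j ∈ Finset.range (k+1), (j : ℝ) * (Pf j (b : (EuclideanSpace ℝ (Fin d))))^2)]
        simp only [Finset.mul_sum]
        rw [Finset.sum_comm]
        refine Finset.sum_nonneg fun j hj => ?_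
        -- represent Pf j in the monomial span
        have hmem := s13affine_prod_mem_span d k j hj cmax (fun i => (a i : ℝ))
        have hranges : Set.range (fun p : Fin r => s13phi d k (e p))
            = Set.range (s13phi d k) := Function.Surjective.range_comp e.surjective (s13phi d k)
        rw [← hranges] at hmem
        obtain ⟨c, hc⟩ := (Submodule.mem_span_range_iff_exists_fun ℝ).mp hmem
        have hceval : ∀ b : ↥B, Pf j (b : (EuclideanSpace ℝ (Fin d))) = ∑ p, c p * v (b : (EuclideanSpace ℝ (Fin d))) p := by
          intro b
          have := congrFun hc (b : (EuclideanSpace ℝ (Fin d)))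
          rw [Finset.sum_apply] at this
          simp only [Pi.smul_apply, smul_eq_mul] at this
          exact this.symm
        have hquad : ∑ b ∈ s, w b * (Pf j (b : (EuclideanSpace ℝ (Fin d))))^2 = c ⬝ᵥ M *ᵥ c := by
          rw [hMw, s13quad]
          exact Finset.sum_congr rfl fun b _ => by rw [hceval b]
        have hpsd : (0:ℝ) ≤ c ⬝ᵥ M *ᵥ c := by
          have := hMpsd.dotProduct_mulVec_nonneg c
          simpa using this
        have : ∑ b ∈ s, w b * ((j : ℝ) * (Pf j (b : (EuclideanSpace ℝ (Fin d))))^2)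
            = (j : ℝ) * ∑ b ∈ s, w b * (Pf j (b : (EuclideanSpace ℝ (Fin d))))^2 := by
          rw [Finset.mul_sum]
          exact Finset.sum_congr rfl fun b _ => by ring
        rw [this, hquad]
        positivity
      show ℓf (T M) ≤ cmax
      linarith
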